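/- arXiv:2310.12578 — 3 statements merged into one kernel-verified Lean document; each statement's English description precedes it below -/
import Mathlib

section
/- Let X₀ be a Banach space and A a closed operator such that {λ(A+λ)^{-1} : λ ∈ S_θ \ {0}} is R-bounded with bound β, and let P be a perturbation such that ‖P(A+λ)^{-1}‖_{L(X₀)} ≤ ε for all λ ∈ S_θ with εβ' < 1 for a suitable constant β' depending only on β and θ. Then A + P (with domain D(A)) is invertible R-sectorial of angle θ, with R-bound controlled by β, θ and ε via the Neumann series estimate: for Rademacher sums, ‖Σ ε_ℓ λ_ℓ (A+P+λ_ℓ)^{-1} u_ℓ‖_{L²(0,1;X₀)} ≤ β Σ_{k≥0} (ε C(β,θ))^k ‖Σ ε_ℓ u_ℓ‖_{L²(0,1;X₀)} whenever ε C(β,θ) < 1. -/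
set_option maxHeartbeats 1000000
set_option synthInstance.maxHeartbeats 400000


noncomputable section

open MeasureTheory Set

/-- The closed sector `S_θ = {λ : |arg λ| ≤ θ} ∪ {0}`. -/
def Sector (θ : ℝ) : Set ℂ := {z : ℂ | z = 0 ∨ |Complex.arg z| ≤ θ}

variable {X₀ X₁ : Type*} [NormedAddCommGroup X₀] [NormedSpace ℂ X₀]
  [NormedAddCommGroup X₁] [NormedSpace ℂ X₁]

/-- `Rl` is the resolvent of `-A` at `λ`, where the (possibly unbounded) operator `A` in `X₀`
is presented by its domain `X₁` (endowed with the graph norm), the continuous embedding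
`J : X₁ → X₀` and its action `A : X₁ → X₀`. -/
def IsResolventAt (J A : X₁ →L[ℂ] X₀) (lam : ℂ) (Rl : X₀ →L[ℂ] X₁) : Prop :=
  (A + lam • J).comp Rl = ContinuousLinearMap.id ℂ X₀ ∧
  Rl.comp (A + lam • J) = ContinuousLinearMap.id ℂ X₁

/-- `A ∈ 𝒫(K,θ)` : invertible sectorial of angle `θ` with sectorial bound `K`,
witnessed by the resolvent family `R`. -/
def IsSectorial (J A : X₁ →L[ℂ] X₀) (θ K : ℝ) (R : ℂ → X₀ →L[ℂ] X₁) : Prop :=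
  ∀ lam ∈ Sector θ, IsResolventAt J A lam (R lam) ∧
    (1 + ‖lam‖) * ‖J.comp (R lam)‖ ≤ K

/-- A set of bounded operators is `R`-bounded with `R`-bound `C` (formulated via
averages over all choices of signs, which coincides with the Rademacher formulation). -/
def RademacherBound {X : Type*} [NormedAddCommGroup X] [NormedSpace ℂ X]
    (E : Set (X →L[ℂ] X)) (C : ℝ) : Prop :=
  ∀ (N : ℕ) (T : Fin N → X →L[ℂ] X) (x : Fin N → X), (∀ i, T i ∈ E) →
    ∑ ε : Fin N → Bool, ‖∑ i, (if ε i then T i (x i) else -(T i (x i)))‖ ^ 2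
      ≤ C ^ 2 * ∑ ε : Fin N → Bool, ‖∑ i, (if ε i then x i else -(x i))‖ ^ 2

/-- The constant `S(θ)`. -/
def Sfun (θ : ℝ) : ℝ := if Real.pi / 2 ≤ θ then Real.sin θ else 1

/-- The class `H₀^∞(φ)` of bounded holomorphic functions on `ℂ \ S_φ` with decay. -/
def HzeroClass (φ : ℝ) (f : ℂ → ℂ) : Prop :=
  DifferentiableOn ℂ f (Sector φ)ᶜ ∧
  ∃ c > (0:ℝ), ∃ η > (0:ℝ), ∀ z ∈ (Sector φ)ᶜ,
    ‖f z‖ ≤ c * (‖z‖ / (1 + ‖z‖ ^ 2)) ^ η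

/-- The Dunford integral `(2πi)⁻¹ ∫_{Γ_θ} f(λ)(A+λ)⁻¹ x dλ` along the boundary of the
sector of angle `θ`, for the operator with resolvent family `R`. -/
def dunford (J : X₁ →L[ℂ] X₀) (R : ℂ → X₀ →L[ℂ] X₁) (θ : ℝ) (f : ℂ → ℂ) (x : X₀) : X₀ :=
  (2 * (Real.pi : ℂ) * Complex.I)⁻¹ •
    ((∫ r in Set.Ioi (0:ℝ),
        (f ((r : ℂ) * Complex.exp ((θ : ℂ) * Complex.I)) * Complex.exp ((θ : ℂ) * Complex.I)) •
          J (R ((r : ℂ) * Complex.exp ((θ : ℂ) * Complex.I)) x)) -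
      ∫ r in Set.Ioi (0:ℝ),
        (f ((r : ℂ) * Complex.exp (-(θ : ℂ) * Complex.I)) * Complex.exp (-(θ : ℂ) * Complex.I)) •
          J (R ((r : ℂ) * Complex.exp (-(θ : ℂ) * Complex.I)) x))

/-- Bounded `H^∞(φ)`-calculus bound `C` for the operator with resolvent family `R`,
the Dunford contour being `Γ_θ`. -/
def HinftyBound (J : X₁ →L[ℂ] X₀) (R : ℂ → X₀ →L[ℂ] X₁) (θ φ C : ℝ) : Prop :=
  ∀ f : ℂ → ℂ, HzeroClass φ f →
    ∀ x : X₀, ‖dunford J R θ f x‖ ≤ C * (⨆ z ∈ (Sector φ)ᶜ, ‖f z‖) * ‖x‖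

/-- Bounded `H^∞`-calculus of angle `φ`. -/
def HasBddHinftyCalculus (J A : X₁ →L[ℂ] X₀) (φ : ℝ) : Prop :=
  ∃ θ ∈ Set.Ioo φ Real.pi, ∃ (R : ℂ → X₀ →L[ℂ] X₁) (K C : ℝ),
    IsSectorial J A θ K R ∧ HinftyBound J R θ φ C

/-- `R`-bounded `H^∞`-calculus of angle `φ`. -/
def HasRBddHinftyCalculus (J A : X₁ →L[ℂ] X₀) (φ : ℝ) : Prop :=
  ∃ θ ∈ Set.Ioo φ Real.pi, ∃ (R : ℂ → X₀ →L[ℂ] X₁) (K : ℝ),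
    IsSectorial J A θ K R ∧
    ∃ β : ℝ, RademacherBound {T : X₀ →L[ℂ] X₀ | ∃ f : ℂ → ℂ, HzeroClass φ f ∧
      (∀ z ∈ (Sector φ)ᶜ, ‖f z‖ ≤ 1) ∧ ∀ x, T x = dunford J R θ f x} β

/-- The UMD property, via the unconditionality of martingale differences. -/
def IsUMD (X : Type*) [NormedAddCommGroup X] [NormedSpace ℂ X] [CompleteSpace X] : Prop :=
  ∀ p : ℝ, 1 < p → ∃ β : ℝ, 0 < β ∧
    ∀ (Ω : Type) (mΩ : MeasurableSpace Ω) (μ : MeasureTheory.Measure Ω)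
      (ℱ : MeasureTheory.Filtration ℕ mΩ) (f : ℕ → Ω → X) (ε : ℕ → ℝ),
      MeasureTheory.IsProbabilityMeasure μ → MeasureTheory.Martingale f ℱ μ →
      (∀ k, ε k = 1 ∨ ε k = -1) → ∀ N : ℕ,
      MeasureTheory.eLpNorm
          (fun ω => ∑ k ∈ Finset.range N, (ε k : ℂ) • (f (k+1) ω - f k ω))
          (ENNReal.ofReal p) μ
        ≤ ENNReal.ofReal β * MeasureTheory.eLpNorm (f N) (ENNReal.ofReal p) μ

section AuxRad
variable {X : Type*} [NormedAddCommGroup X]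

lemma le_of_sq_le_sq'' {a b : ℝ} (ha : 0 ≤ a) (hb : 0 ≤ b) (h : a ^ 2 ≤ b ^ 2) : a ≤ b := by
  nlinarith

/-- The Rademacher vector of a finite family, as an element of an `L²`-type space. -/
def radVec {N : ℕ} (y : Fin N → X) : PiLp 2 (fun _ : Fin N → Bool => X) :=
  WithLp.toLp 2 (fun e => ∑ i, if e i then y i else -(y i))

lemma radVec_apply {N : ℕ} (y : Fin N → X) (e : Fin N → Bool) :
    radVec y e = ∑ i, if e i then y i else -(y i) := rfl

lemma radVec_sq {N : ℕ} (y : Fin N → X) :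
    ∑ e : Fin N → Bool, ‖∑ i, if e i then y i else -(y i)‖ ^ 2 = ‖radVec y‖ ^ 2 := by
  rw [PiLp.norm_sq_eq_of_L2]
  rfl

lemma pilp2_norm_le_of_forall {ι : Type*} [Fintype ι] {c : ℝ} (hc : 0 ≤ c)
    (z₁ z₂ : PiLp 2 (fun _ : ι => X)) (h : ∀ e, ‖z₁ e‖ ≤ c * ‖z₂ e‖) :
    ‖z₁‖ ≤ c * ‖z₂‖ := by
  refine le_of_sq_le_sq'' (norm_nonneg _) (mul_nonneg hc (norm_nonneg _)) ?_
  rw [PiLp.norm_sq_eq_of_L2, mul_pow, PiLp.norm_sq_eq_of_L2, Finset.mul_sum]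
  refine Finset.sum_le_sum fun e _ => ?_
  have he := h e
  have h1 := norm_nonneg (z₁ e)
  have h2 := norm_nonneg (z₂ e)
  nlinarith

end AuxRad

section Neumann
variable {Y₀ Y₁ : Type*} [NormedAddCommGroup Y₀] [NormedSpace ℂ Y₀] [CompleteSpace Y₀]
  [NormedAddCommGroup Y₁] [NormedSpace ℂ Y₁]

lemma clm_norm_pow_le {u : Y₀ →L[ℂ] Y₀} {ε : ℝ} (hu : ‖u‖ ≤ ε) :
    ∀ k : ℕ, ‖u ^ k‖ ≤ ε ^ k := by
  have hε0 : 0 ≤ ε := le_trans (norm_nonneg u) hu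
  intro k
  induction k with
  | zero => rw [pow_zero, pow_zero]; exact ContinuousLinearMap.norm_id_le
  | succ k ih =>
      rw [pow_succ, pow_succ]
      exact le_trans (norm_mul_le _ _)
        (mul_le_mul ih hu (norm_nonneg _) (pow_nonneg hε0 k))

lemma neumann_norm_le {u : Y₀ →L[ℂ] Y₀} {ε : ℝ} (hu : ‖u‖ ≤ ε) (hε1 : ε < 1) :
    ‖∑' k : ℕ, u ^ k‖ ≤ (1 - ε)⁻¹ := by
  have hε0 : 0 ≤ ε := le_trans (norm_nonneg u) hu
  have hsumnorm : Summable fun k : ℕ => ‖u ^ k‖ :=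
    Summable.of_nonneg_of_le (fun k => norm_nonneg _) (clm_norm_pow_le hu)
      (summable_geometric_of_lt_one hε0 hε1)
  calc ‖∑' k : ℕ, u ^ k‖ ≤ ∑' k : ℕ, ‖u ^ k‖ := norm_tsum_le_tsum_norm hsumnorm
    _ ≤ ∑' k : ℕ, ε ^ k :=
        Summable.tsum_le_tsum (clm_norm_pow_le hu) hsumnorm (summable_geometric_of_lt_one hε0 hε1)
    _ = (1 - ε)⁻¹ := tsum_geometric_of_lt_one hε0 hε1

open ContinuousLinearMap in
lemma perturbed_resolvent (J A P : Y₁ →L[ℂ] Y₀) (lam : ℂ) (Rl : Y₀ →L[ℂ] Y₁)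
    (h1 : (A + lam • J).comp Rl = ContinuousLinearMap.id ℂ Y₀)
    (h2 : Rl.comp (A + lam • J) = ContinuousLinearMap.id ℂ Y₁)
    (hu : ‖-(P.comp Rl)‖ < 1) :
    ((A + P) + lam • J).comp (Rl.comp (∑' k : ℕ, (-(P.comp Rl)) ^ k))
      = ContinuousLinearMap.id ℂ Y₀ ∧
    (Rl.comp (∑' k : ℕ, (-(P.comp Rl)) ^ k)).comp ((A + P) + lam • J)
      = ContinuousLinearMap.id ℂ Y₁ := by
  set t : Y₀ →L[ℂ] Y₀ := -(P.comp Rl) with ht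
  set Nt : Y₀ →L[ℂ] Y₀ := ∑' k : ℕ, t ^ k with hNt
  have hL : (1 - t) * Nt = 1 := mul_neg_geom_series t hu
  have hR : Nt * (1 - t) = 1 := geom_series_mul_neg t hu
  have h1t : (1 : Y₀ →L[ℂ] Y₀) - t = ContinuousLinearMap.id ℂ Y₀ + P.comp Rl := by
    rw [ht, sub_neg_eq_add, ContinuousLinearMap.one_def]
  have hfront : ((A + P) + lam • J).comp Rl = 1 - t := by
    have hre : (A + P) + lam • J = (A + lam • J) + P := by abel
    rw [hre, ContinuousLinearMap.add_comp, h1, h1t]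
  have hback : (A + P) + lam • J = (1 - t).comp (A + lam • J) := by
    have key : (ContinuousLinearMap.id ℂ Y₀ + P.comp Rl).comp (A + lam • J)
        = (A + lam • J) + P := by
      rw [ContinuousLinearMap.add_comp, ContinuousLinearMap.id_comp,
        ContinuousLinearMap.comp_assoc, h2, ContinuousLinearMap.comp_id]
    rw [h1t, key]; abel
  have hNC : Nt.comp (1 - t) = ContinuousLinearMap.id ℂ Y₀ := by
    rw [← ContinuousLinearMap.mul_def, hR]; rfl
  constructor
  · rw [← ContinuousLinearMap.comp_assoc, hfront, ← ContinuousLinearMap.mul_def, hL]; rfl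
  · rw [hback, ContinuousLinearMap.comp_assoc,
      ← ContinuousLinearMap.comp_assoc Nt (1 - t) (A + lam • J), hNC,
      ContinuousLinearMap.id_comp, h2]

end Neumann

/-- `R`-sectoriality is stable under small relative perturbations: if `A` is
invertible `R`-sectorial of angle `θ` with `R`-bound `β` and `‖P(A+λ)⁻¹‖ ≤ ε` on `S_θ` with
`ε (β+1)(1+2/S(θ)) < 1`, then `A + P` is invertible `R`-sectorial of angle `θ` with `R`-bound
`β / (1 − ε(β+1)(1+2/S(θ)))`. -/
theorem rsectorial_perturbation
    {X₀ X₁ : Type*} [NormedAddCommGroup X₀] [NormedSpace ℂ X₀] [CompleteSpace X₀]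
    [NormedAddCommGroup X₁] [NormedSpace ℂ X₁] [CompleteSpace X₁]
    (J A P : X₁ →L[ℂ] X₀) (θ β ε : ℝ) (hθ : θ ∈ Set.Ico 0 Real.pi) (hβ : 1 ≤ β)
    (R : ℂ → X₀ →L[ℂ] X₁)
    (hres : ∀ lam ∈ Sector θ, IsResolventAt J A lam (R lam))
    (hsect : ∃ K : ℝ, ∀ lam ∈ Sector θ, (1 + ‖lam‖) * ‖J.comp (R lam)‖ ≤ K)
    (hRb : RademacherBound
      {T : X₀ →L[ℂ] X₀ | ∃ lam ∈ Sector θ, lam ≠ 0 ∧ T = lam • J.comp (R lam)} β)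
    (hε : 0 ≤ ε) (hP : ∀ lam ∈ Sector θ, ‖P.comp (R lam)‖ ≤ ε)
    (hsmall : ε * ((β + 1) * (1 + 2 / Sfun θ)) < 1) :
    ∃ R' : ℂ → X₀ →L[ℂ] X₁,
      (∀ lam ∈ Sector θ, IsResolventAt J (A + P) lam (R' lam)) ∧
      (∃ K' : ℝ, ∀ lam ∈ Sector θ, (1 + ‖lam‖) * ‖J.comp (R' lam)‖ ≤ K') ∧
      RademacherBound
        {T : X₀ →L[ℂ] X₀ | ∃ lam ∈ Sector θ, lam ≠ 0 ∧ T = lam • J.comp (R' lam)}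
        (β / (1 - ε * ((β + 1) * (1 + 2 / Sfun θ)))) := by
  classical
  obtain ⟨hθ0, hθπ⟩ := hθ
  -- basic numeric facts
  have hS0 : 0 < Sfun θ := by
    unfold Sfun
    split
    · rename_i h
      exact Real.sin_pos_of_pos_of_lt_pi (lt_of_lt_of_le (by positivity) h) hθπ
    · norm_num
  have hβ0 : (0:ℝ) ≤ β := le_trans zero_le_one hβ
  have hfac1 : (1:ℝ) ≤ 1 + 2 / Sfun θ := by
    have : (0:ℝ) ≤ 2 / Sfun θ := div_nonneg (by norm_num) hS0.le
    linarith
  have hCb : β + 1 ≤ (β + 1) * (1 + 2 / Sfun θ) := by nlinarith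
  have hrC : ε * (β + 1) ≤ ε * ((β + 1) * (1 + 2 / Sfun θ)) :=
    mul_le_mul_of_nonneg_left hCb hε
  have hr1 : ε * (β + 1) < 1 := lt_of_le_of_lt hrC hsmall
  have hr0 : 0 ≤ ε * (β + 1) := mul_nonneg hε (by linarith)
  have hε1 : ε < 1 := by nlinarith
  have hden : 0 < 1 - ε * ((β + 1) * (1 + 2 / Sfun θ)) := by linarith
  have hdenr : 0 < 1 - ε * (β + 1) := by linarith
  have h0mem : (0:ℂ) ∈ Sector θ := Or.inl rfl
  have hPRlt : ∀ lam ∈ Sector θ, ‖-(P.comp (R lam))‖ < 1 := by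
    intro lam hl
    rw [norm_neg]
    exact lt_of_le_of_lt (hP lam hl) hε1
  refine ⟨fun lam => (R lam).comp (∑' k : ℕ, (-(P.comp (R lam))) ^ k), ?_, ?_, ?_⟩
  · -- resolvent identities
    intro lam hl
    exact perturbed_resolvent J A P lam (R lam) (hres lam hl).1 (hres lam hl).2 (hPRlt lam hl)
  · -- sectorial bound
    obtain ⟨K, hK⟩ := hsect
    refine ⟨K * (1 - ε)⁻¹, fun lam hl => ?_⟩
    have hN : ‖∑' k : ℕ, (-(P.comp (R lam))) ^ k‖ ≤ (1 - ε)⁻¹ :=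
      neumann_norm_le (by rw [norm_neg]; exact hP lam hl) hε1
    have hcomp : ‖J.comp ((R lam).comp (∑' k : ℕ, (-(P.comp (R lam))) ^ k))‖
        ≤ ‖J.comp (R lam)‖ * (1 - ε)⁻¹ := by
      rw [← ContinuousLinearMap.comp_assoc]
      exact le_trans (ContinuousLinearMap.opNorm_comp_le _ _)
        (mul_le_mul_of_nonneg_left hN (norm_nonneg _))
    have h1l : (0:ℝ) ≤ 1 + ‖lam‖ := by positivity
    calc (1 + ‖lam‖) * ‖J.comp ((R lam).comp (∑' k : ℕ, (-(P.comp (R lam))) ^ k))‖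
        ≤ (1 + ‖lam‖) * (‖J.comp (R lam)‖ * (1 - ε)⁻¹) :=
          mul_le_mul_of_nonneg_left hcomp h1l
      _ = ((1 + ‖lam‖) * ‖J.comp (R lam)‖) * (1 - ε)⁻¹ := by ring
      _ ≤ K * (1 - ε)⁻¹ := by
          have := hK lam hl
          have h1e : (0:ℝ) ≤ (1 - ε)⁻¹ := inv_nonneg.mpr (by linarith)
          exact mul_le_mul_of_nonneg_right this h1e
  · -- the R-bound
    intro N T x hT
    choose lam hlam hlam0 hTeq using hT
    set S : Fin N → X₀ →L[ℂ] X₀ := fun i => lam i • (J.comp (R (lam i))) with hSdef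
    set t : Fin N → X₀ →L[ℂ] X₀ := fun i => -(P.comp (R (lam i))) with htdef
    -- R-boundedness of the original family, in norm form
    have hS : ∀ y : Fin N → X₀, ‖radVec (fun i => S i (y i))‖ ≤ β * ‖radVec y‖ := by
      intro y
      have h := hRb N S y (fun i => ⟨lam i, hlam i, hlam0 i, by rw [hSdef]⟩)
      simp only [radVec_sq] at h
      refine le_of_sq_le_sq'' (norm_nonneg _) (mul_nonneg hβ0 (norm_nonneg _)) ?_
      rw [mul_pow]
      exact h
    -- resolvent decomposition
    have h0A : ∀ w : X₁, R 0 (A w) = w := by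
      intro w
      have h00 := ContinuousLinearMap.ext_iff.mp (hres 0 h0mem).2 w
      simpa using h00
    have hRdec : ∀ i (v : X₀), R (lam i) v = R 0 (v - S i v) := by
      intro i v
      have h1v := ContinuousLinearMap.ext_iff.mp (hres (lam i) (hlam i)).1 v
      simp only [ContinuousLinearMap.comp_apply, ContinuousLinearMap.add_apply,
        ContinuousLinearMap.smul_apply, ContinuousLinearMap.coe_id', id_eq] at h1v
      have hSv : S i v = lam i • J (R (lam i) v) := by
        rw [hSdef]
        simp
      have hA : A (R (lam i) v) = v - S i v := by
        rw [hSv, eq_sub_iff_add_eq]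
        exact h1v
      rw [← hA, h0A]
    have hti : ∀ i (v : X₀), t i v = P (R 0 (S i v)) - P (R 0 v) := by
      intro i v
      have h1 : t i v = -(P (R (lam i) v)) := by rw [htdef]; simp
      rw [h1, hRdec i v, map_sub, map_sub, neg_sub]
    -- the perturbation step
    have hstep : ∀ y : Fin N → X₀,
        ‖radVec (fun i => t i (y i))‖ ≤ (ε * (β + 1)) * ‖radVec y‖ := by
      intro y
      have hPR0 : ‖P.comp (R 0)‖ ≤ ε := hP 0 h0mem
      have hcompwise : ∀ e, ‖radVec (fun i => t i (y i)) e‖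
          ≤ ε * ‖(radVec (fun i => S i (y i)) - radVec y) e‖ := by
        intro e
        have hid : radVec (fun i => t i (y i)) e
            = (P.comp (R 0)) ((radVec (fun i => S i (y i)) - radVec y) e) := by
          have hsub : (radVec (fun i => S i (y i)) - radVec y) e
              = radVec (fun i => S i (y i)) e - radVec y e := rfl
          rw [hsub, radVec_apply, radVec_apply, radVec_apply, ← Finset.sum_sub_distrib, map_sum]
          refine Finset.sum_congr rfl fun i _ => ?_
          by_cases hb : e i
          · simp only [hb, if_true, ContinuousLinearMap.comp_apply, map_sub, map_neg,
              hti i (y i)]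
          · simp only [hb, Bool.false_eq_true, if_false, ContinuousLinearMap.comp_apply,
              map_sub, map_neg, hti i (y i)]
            abel
        rw [hid]
        exact le_trans ((P.comp (R 0)).le_opNorm _)
          (mul_le_mul_of_nonneg_right hPR0 (norm_nonneg _))
      have h1 := pilp2_norm_le_of_forall hε _ _ hcompwise
      have h2 : ‖radVec (fun i => S i (y i)) - radVec y‖ ≤ (β + 1) * ‖radVec y‖ := by
        have ht1 := norm_sub_le (radVec (fun i => S i (y i))) (radVec y)
        have ht2 := hS y
        nlinarith [norm_nonneg (radVec y)]
      calc ‖radVec (fun i => t i (y i))‖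
          ≤ ε * ‖radVec (fun i => S i (y i)) - radVec y‖ := h1
        _ ≤ ε * ((β + 1) * ‖radVec y‖) := mul_le_mul_of_nonneg_left h2 hε
        _ = (ε * (β + 1)) * ‖radVec y‖ := by ring
    -- iterated powers
    have hwk : ∀ k : ℕ, ‖radVec (fun i => ((t i) ^ k) (x i))‖
        ≤ (ε * (β + 1)) ^ k * ‖radVec x‖ := by
      intro k
      induction k with
      | zero => simp [pow_zero, ContinuousLinearMap.one_apply]
      | succ k ih =>
          have hfun : (fun i => ((t i) ^ (k+1)) (x i)) = fun i => t i (((t i) ^ k) (x i)) := by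
            funext i
            rw [pow_succ']
            rfl
          rw [hfun]
          calc ‖radVec (fun i => t i (((t i) ^ k) (x i)))‖
              ≤ (ε * (β + 1)) * ‖radVec (fun i => ((t i) ^ k) (x i))‖ := hstep _
            _ ≤ (ε * (β + 1)) * ((ε * (β + 1)) ^ k * ‖radVec x‖) :=
                mul_le_mul_of_nonneg_left ih hr0
            _ = (ε * (β + 1)) ^ (k+1) * ‖radVec x‖ := by ring
    have hvk : ∀ k : ℕ, ‖radVec (fun i => S i (((t i) ^ k) (x i)))‖
        ≤ (β * ‖radVec x‖) * (ε * (β + 1)) ^ k := by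
      intro k
      calc ‖radVec (fun i => S i (((t i) ^ k) (x i)))‖
          ≤ β * ‖radVec (fun i => ((t i) ^ k) (x i))‖ := hS _
        _ ≤ β * ((ε * (β + 1)) ^ k * ‖radVec x‖) := mul_le_mul_of_nonneg_left (hwk k) hβ0
        _ = (β * ‖radVec x‖) * (ε * (β + 1)) ^ k := by ring
    have hsummg : Summable (fun k : ℕ => (β * ‖radVec x‖) * (ε * (β + 1)) ^ k) :=
      (summable_geometric_of_lt_one hr0 hr1).mul_left _
    have hsummn : Summable (fun k : ℕ => ‖radVec (fun i => S i (((t i) ^ k) (x i)))‖) :=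
      Summable.of_nonneg_of_le (fun _ => norm_nonneg _) hvk hsummg
    -- summation of the Neumann series
    have hQ : ∀ i, HasSum (fun k : ℕ => ((t i) ^ k) (x i))
        ((∑' k : ℕ, (t i) ^ k) (x i)) := by
      intro i
      have hlt : ‖t i‖ < 1 := by
        rw [htdef]
        simpa using hPRlt (lam i) (hlam i)
      exact ((summable_geometric_of_norm_lt_one hlt).hasSum).mapL
        (ContinuousLinearMap.apply ℂ X₀ (x i))
    have hTx : ∀ i, T i (x i) = S i ((∑' k : ℕ, (t i) ^ k) (x i)) := by
      intro i
      rw [hTeq i, hSdef, htdef]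
      simp
    have hsumZ : HasSum (fun k : ℕ => radVec (fun i => S i (((t i) ^ k) (x i))))
        (radVec (fun i => T i (x i))) := by
      have hfun : (fun i => T i (x i)) = fun i => S i ((∑' k : ℕ, (t i) ^ k) (x i)) :=
        funext hTx
      rw [hfun]
      have hcomp : ∀ e : Fin N → Bool,
          HasSum (fun k : ℕ => radVec (fun i => S i (((t i) ^ k) (x i))) e)
            (radVec (fun i => S i ((∑' k : ℕ, (t i) ^ k) (x i))) e) := by
        intro e
        simp only [radVec_apply]
        refine hasSum_sum fun i _ => ?_
        by_cases hb : e i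
        · simp only [hb, if_true]
          exact (hQ i).mapL (S i)
        · simp only [hb, if_false]
          exact ((hQ i).mapL (S i)).neg
      exact (PiLp.continuousLinearEquiv 2 ℂ
        (fun _ : Fin N → Bool => X₀)).hasSum'.mp (Pi.hasSum.mpr hcomp)
    -- final estimate
    have hfinal : ‖radVec (fun i => T i (x i))‖
        ≤ (β / (1 - ε * ((β + 1) * (1 + 2 / Sfun θ)))) * ‖radVec x‖ := by
      have h1 : ‖radVec (fun i => T i (x i))‖
          ≤ ∑' k : ℕ, ‖radVec (fun i => S i (((t i) ^ k) (x i)))‖ := by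
        rw [← hsumZ.tsum_eq]
        exact norm_tsum_le_tsum_norm hsummn
      have h2 : (∑' k : ℕ, ‖radVec (fun i => S i (((t i) ^ k) (x i)))‖)
          ≤ ∑' k : ℕ, (β * ‖radVec x‖) * (ε * (β + 1)) ^ k :=
        Summable.tsum_le_tsum hvk hsummn hsummg
      have h3 : (∑' k : ℕ, (β * ‖radVec x‖) * (ε * (β + 1)) ^ k)
          = (β * ‖radVec x‖) * (1 - ε * (β + 1))⁻¹ := by
        rw [tsum_mul_left, tsum_geometric_of_lt_one hr0 hr1]
      have hinv : (1 - ε * (β + 1))⁻¹ ≤ (1 - ε * ((β + 1) * (1 + 2 / Sfun θ)))⁻¹ := by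
        apply inv_anti₀ hden
        linarith
      have h4 : (β * ‖radVec x‖) * (1 - ε * (β + 1))⁻¹
          ≤ (β / (1 - ε * ((β + 1) * (1 + 2 / Sfun θ)))) * ‖radVec x‖ := by
        rw [div_eq_mul_inv]
        have hbx : 0 ≤ β * ‖radVec x‖ := mul_nonneg hβ0 (norm_nonneg _)
        calc (β * ‖radVec x‖) * (1 - ε * (β + 1))⁻¹
            ≤ (β * ‖radVec x‖) * (1 - ε * ((β + 1) * (1 + 2 / Sfun θ)))⁻¹ :=
              mul_le_mul_of_nonneg_left hinv hbx
          _ = β * (1 - ε * ((β + 1) * (1 + 2 / Sfun θ)))⁻¹ * ‖radVec x‖ := by ring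
      calc ‖radVec (fun i => T i (x i))‖
          ≤ ∑' k : ℕ, ‖radVec (fun i => S i (((t i) ^ k) (x i)))‖ := h1
        _ ≤ ∑' k : ℕ, (β * ‖radVec x‖) * (ε * (β + 1)) ^ k := h2
        _ = (β * ‖radVec x‖) * (1 - ε * (β + 1))⁻¹ := h3
        _ ≤ (β / (1 - ε * ((β + 1) * (1 + 2 / Sfun θ)))) * ‖radVec x‖ := h4
    have hc0 : 0 ≤ β / (1 - ε * ((β + 1) * (1 + 2 / Sfun θ))) := div_nonneg hβ0 hden.le
    simp only [radVec_sq]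
    calc ‖radVec (fun i => T i (x i))‖ ^ 2
        ≤ ((β / (1 - ε * ((β + 1) * (1 + 2 / Sfun θ)))) * ‖radVec x‖) ^ 2 :=
          pow_le_pow_left₀ (norm_nonneg _) hfinal 2
      _ = (β / (1 - ε * ((β + 1) * (1 + 2 / Sfun θ)))) ^ 2 * ‖radVec x‖ ^ 2 := by ring
end
end

section
/- Let X be a Banach space, θ ∈ [0,π), and let A be a closed operator on X with a bounded H^∞(θ)-calculus. Then for any p ∈ (1,∞), the canonical extension of A to L^p(Ω; X) (for a σ-finite measure space Ω), acting pointwise with domain L^p(Ω; D(A)), again has bounded H^∞-calculus of angle θ, with resolvents and functional calculus acting pointwise: (f(-A_ext) u)(ω) = f(-A) u(ω) for a.e. ω. The calculus bound of the extension is controlled by the calculus bound of A via Kahane's inequality. -/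
noncomputable section

open MeasureTheory Set

variable {X₀ X₁ : Type*} [NormedAddCommGroup X₀] [NormedSpace ℂ X₀]
  [NormedAddCommGroup X₁] [NormedSpace ℂ X₁]

section AuxLemmas

open Complex in
lemma abs_r_exp (r φ : ℝ) : ‖(r:ℂ) * Complex.exp ((φ:ℂ) * Complex.I)‖ = |r| := by
  rw [norm_mul, Complex.norm_real, Real.norm_eq_abs, Complex.norm_exp_ofReal_mul_I, mul_one]

lemma arg_r_exp {r φ : ℝ} (hr : 0 < r) (hφ : φ ∈ Set.Ioc (-Real.pi) Real.pi) :
    Complex.arg ((r:ℂ) * Complex.exp ((φ:ℂ) * Complex.I)) = φ := by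
  rw [Complex.arg_real_mul _ hr, Complex.exp_mul_I]
  exact Complex.arg_cos_add_sin_mul_I hφ

lemma r_exp_ne_zero {r φ : ℝ} (hr : 0 < r) :
    ((r:ℂ) * Complex.exp ((φ:ℂ) * Complex.I)) ≠ 0 := by
  intro h
  have := abs_r_exp r φ
  rw [h] at this
  simp only [map_zero, norm_zero] at this
  rw [abs_of_pos hr] at this
  linarith

lemma mem_sector {r φ θ : ℝ} (hr : 0 < r) (hφ : φ ∈ Set.Ioc (-Real.pi) Real.pi)
    (h : |φ| ≤ θ) : (r:ℂ) * Complex.exp ((φ:ℂ) * Complex.I) ∈ Sector θ :=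
  Or.inr (by rw [arg_r_exp hr hφ]; exact h)

lemma mem_sector_compl {r φ θ : ℝ} (hr : 0 < r) (hφ : φ ∈ Set.Ioc (-Real.pi) Real.pi)
    (h : θ < |φ|) : (r:ℂ) * Complex.exp ((φ:ℂ) * Complex.I) ∈ (Sector θ)ᶜ := by
  intro hc
  rcases hc with hc | hc
  · exact r_exp_ne_zero hr hc
  · rw [arg_r_exp hr hφ] at hc; linarith

lemma resolvent_diff {J A : X₁ →L[ℂ] X₀} {θ K : ℝ} {R : ℂ → X₀ →L[ℂ] X₁}
    (h : IsSectorial J A θ K R) {lam mu : ℂ} (hl : lam ∈ Sector θ) (hm : mu ∈ Sector θ) :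
    J.comp (R mu) - J.comp (R lam)
      = (lam - mu) • ((J.comp (R mu)).comp (J.comp (R lam))) := by
  ext x
  have h1 : A (R lam x) + lam • J (R lam x) = x := by
    have := congrArg (fun (T : X₀ →L[ℂ] X₀) => T x) (h lam hl).1.1
    simpa using this
  have h2 : ∀ v : X₁, R mu (A v + mu • J v) = v := by
    intro v
    have := congrArg (fun (T : X₁ →L[ℂ] X₁) => T v) (h mu hm).1.2
    simpa using this
  have hx : x = (A (R lam x) + mu • J (R lam x)) + (lam - mu) • J (R lam x) := by
    conv_lhs => rw [← h1]
    rw [sub_smul]; abel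
  have key := congrArg (R mu) hx
  rw [map_add, ContinuousLinearMap.map_smul, h2] at key
  simp only [ContinuousLinearMap.coe_sub', Pi.sub_apply, ContinuousLinearMap.comp_apply,
    ContinuousLinearMap.smul_apply, ContinuousLinearMap.coe_smul', Pi.smul_apply]
  rw [key, map_add, ContinuousLinearMap.map_smul]
  abel

lemma K_nonneg {J A : X₁ →L[ℂ] X₀} {θ K : ℝ} {R : ℂ → X₀ →L[ℂ] X₁}
    (h : IsSectorial J A θ K R) : 0 ≤ K := by
  have h0 : (0:ℂ) ∈ Sector θ := Or.inl rfl
  have := (h 0 h0).2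
  simp only [map_zero, norm_zero, add_zero] at this
  nlinarith [norm_nonneg (J.comp (R 0))]

lemma JR_norm_le {J A : X₁ →L[ℂ] X₀} {θ K : ℝ} {R : ℂ → X₀ →L[ℂ] X₁}
    (h : IsSectorial J A θ K R) {lam : ℂ} (hl : lam ∈ Sector θ) :
    ‖J.comp (R lam)‖ ≤ K / (1 + ‖lam‖) := by
  have hpos : (0:ℝ) < 1 + ‖lam‖ := by positivity
  rw [le_div_iff₀ hpos, mul_comm]
  exact (h lam hl).2

variable {α : Type*} [MeasurableSpace α] {μ' : Measure α} {p' : ENNReal} [Fact (1 ≤ p')]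
variable {E F G : Type*} [NormedAddCommGroup E] [NormedSpace ℂ E]
  [NormedAddCommGroup F] [NormedSpace ℂ F] [NormedAddCommGroup G] [NormedSpace ℂ G]

lemma compLpL_comp' (g : F →L[ℂ] G) (h : E →L[ℂ] F) :
    (g.comp h).compLpL p' μ' = (g.compLpL p' μ').comp (h.compLpL p' μ') := by
  ext1 U
  apply MeasureTheory.Lp.ext
  filter_upwards [ContinuousLinearMap.coeFn_compLpL (p := p') (μ := μ') (g.comp h) U,
    ContinuousLinearMap.coeFn_compLpL (p := p') (μ := μ') h U,
    ContinuousLinearMap.coeFn_compLpL (p := p') (μ := μ') g (h.compLpL p' μ' U)]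
    with a h1 h2 h3
  rw [ContinuousLinearMap.comp_apply, h1, h3, h2, ContinuousLinearMap.comp_apply]

lemma compLpL_id' : (ContinuousLinearMap.id ℂ E).compLpL p' μ'
    = ContinuousLinearMap.id ℂ (Lp E p' μ') := by
  ext1 U
  apply MeasureTheory.Lp.ext
  filter_upwards [ContinuousLinearMap.coeFn_compLpL (p := p') (μ := μ')
    (ContinuousLinearMap.id ℂ E) U] with a h1
  simpa using h1

/-- Evaluation of `compLpL` at a fixed `U`, as a continuous linear map in the operator. -/
def applyCompLp (p : ENNReal) [Fact (1 ≤ p)] (μ : Measure α) (U : Lp E p μ) :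
    (E →L[ℂ] F) →L[ℂ] Lp F p μ :=
  LinearMap.mkContinuous
    { toFun := fun S => S.compLp U
      map_add' := fun S T => ContinuousLinearMap.add_compLp S T U
      map_smul' := fun c S => ContinuousLinearMap.smul_compLp c S U }
    ‖U‖ (fun S => by
      rw [mul_comm]
      exact ContinuousLinearMap.norm_compLp_le S U)

lemma applyCompLp_apply (p : ENNReal) [Fact (1 ≤ p)] (μ : Measure α) (U : Lp E p μ)
    (S : E →L[ℂ] F) : applyCompLp p μ U S = S.compLpL p μ U := rfl

lemma integrable_dom {η : ℝ} (hη : 0 < η) :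
    MeasureTheory.IntegrableOn
      (fun r : ℝ => if r ≤ 1 then r ^ η else r ^ (-1 - η)) (Set.Ioi 0) := by
  have h1 : MeasureTheory.IntegrableOn (fun r : ℝ => r ^ η) (Set.Ioo (0:ℝ) 1) :=
    (intervalIntegral.integrableOn_Ioo_rpow_iff one_pos).mpr (by linarith)
  have h1' : MeasureTheory.IntegrableOn (fun r : ℝ => r ^ η) (Set.Ioc (0:ℝ) 1) :=
    (integrableOn_Ioc_iff_integrableOn_Ioo (hb := enorm_ne_top)).mpr h1
  have h2 : MeasureTheory.IntegrableOn (fun r : ℝ => r ^ (-1 - η)) (Set.Ioi (1:ℝ)) :=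
    integrableOn_Ioi_rpow_of_lt (by linarith) one_pos
  have hs : Set.Ioi (0:ℝ) = Set.Ioc 0 1 ∪ Set.Ioi 1 :=
    (Set.Ioc_union_Ioi_eq_Ioi (by norm_num)).symm
  rw [hs]
  apply MeasureTheory.IntegrableOn.union
  · exact h1'.congr_fun (fun x hx => by simp [hx.2]) measurableSet_Ioc
  · exact h2.congr_fun (fun x hx => by simp [not_le.mpr (Set.mem_Ioi.mp hx)]) measurableSet_Ioi

lemma point_bound {η : ℝ} (hη : 0 < η) {r : ℝ} (hr : 0 < r) :
    (r / (1 + r ^ 2)) ^ η / (1 + r) ≤ if r ≤ 1 then r ^ η else r ^ (-1 - η) := by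
  have hd : (0:ℝ) < 1 + r ^ 2 := by positivity
  have hnum : (0:ℝ) ≤ r / (1 + r ^ 2) := by positivity
  split_ifs with h
  · calc (r / (1 + r ^ 2)) ^ η / (1 + r) ≤ (r / (1 + r ^ 2)) ^ η :=
          div_le_self (Real.rpow_nonneg hnum η) (by linarith)
      _ ≤ r ^ η := Real.rpow_le_rpow hnum (by
          rw [div_le_iff₀ hd]; nlinarith) hη.le
  · push_neg at h
    have hr2 : (0:ℝ) < r ^ 2 := by positivity
    calc (r / (1 + r ^ 2)) ^ η / (1 + r) ≤ (r⁻¹) ^ η / (1 + r) := by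
          apply (div_le_div_iff_of_pos_right (by linarith : (0:ℝ) < 1 + r)).mpr
          apply Real.rpow_le_rpow hnum ?_ hη.le
          rw [div_le_iff₀ hd, inv_mul_eq_div, le_div_iff₀ hr]
          nlinarith
      _ ≤ (r⁻¹) ^ η / r := by
          apply div_le_div_of_nonneg_left (Real.rpow_nonneg (by positivity) η) hr (by linarith)
      _ = r ^ (-1 - η) := by
          rw [Real.inv_rpow hr.le, ← Real.rpow_neg hr.le, div_eq_mul_inv,
            ← Real.rpow_neg_one r, ← Real.rpow_add hr]
          ring_nf

end AuxLemmas


lemma ray_op {X XD : Type*} [NormedAddCommGroup X] [NormedSpace ℂ X] [CompleteSpace X]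
    [NormedAddCommGroup XD] [NormedSpace ℂ XD] [CompleteSpace XD]
    {Ω : Type*} [MeasurableSpace Ω] (μ : MeasureTheory.Measure Ω)
    (p : ENNReal) [Fact (1 ≤ p)]
    (J A : XD →L[ℂ] X) {θc K : ℝ} {R : ℂ → X →L[ℂ] XD}
    (hsect : IsSectorial J A θc K R) (hK0 : 0 ≤ K)
    {θ : ℝ} (f : ℂ → ℂ) (hdiff : DifferentiableOn ℂ f (Sector θ)ᶜ)
    {c η : ℝ} (hc : 0 < c) (hη : 0 < η)
    (hdecay : ∀ z ∈ (Sector θ)ᶜ,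
      ‖f z‖ ≤ c * (‖z‖ / (1 + ‖z‖ ^ 2)) ^ η)
    (E : ℂ) (hEabs : ‖E‖ = 1)
    (hmem : ∀ r : ℝ, 0 < r → (r:ℂ) * E ∈ Sector θc)
    (hmemc : ∀ r : ℝ, 0 < r → (r:ℂ) * E ∈ (Sector θ)ᶜ) :
    ∃ Pp : X →L[ℂ] X,
      (∀ x : X, Pp x = ∫ r in Set.Ioi (0:ℝ), (f ((r:ℂ) * E) * E) • J (R ((r:ℂ) * E) x)) ∧
      (∀ U : MeasureTheory.Lp X p μ,
        (∫ r in Set.Ioi (0:ℝ), (f ((r:ℂ) * E) * E) •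
            (ContinuousLinearMap.compLpL p μ J)
              ((ContinuousLinearMap.compLpL p μ (R ((r:ℂ) * E))) U))
          = ContinuousLinearMap.compLpL p μ Pp U) := by
  have habs : ∀ r : ℝ, 0 < r → ‖(r:ℂ) * E‖ = r := by
    intro r hr
    rw [norm_mul, Complex.norm_real, Real.norm_eq_abs, hEabs, mul_one, abs_of_pos hr]
  -- continuity of the resolvents along the ray
  have hlip : LipschitzOnWith (Real.toNNReal (K * K))
      (fun r : ℝ => J.comp (R ((r:ℂ) * E))) (Set.Ioi 0) := by
    apply LipschitzOnWith.of_dist_le' (K := K * K)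
    intro r hr s hs
    show dist (J.comp (R ((r:ℂ) * E))) (J.comp (R ((s:ℂ) * E))) ≤ K * K * dist r s
    rw [dist_eq_norm, dist_eq_norm]
    have hdiffeq := resolvent_diff hsect (hmem s (Set.mem_Ioi.mp hs)) (hmem r (Set.mem_Ioi.mp hr))
    rw [Real.norm_eq_abs, hdiffeq]
    have h1 : ‖J.comp (R ((r:ℂ) * E))‖ ≤ K :=
      le_trans (JR_norm_le hsect (hmem r (Set.mem_Ioi.mp hr)))
        (div_le_self hK0 (le_add_of_nonneg_right (norm_nonneg _)))
    have h2 : ‖J.comp (R ((s:ℂ) * E))‖ ≤ K :=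
      le_trans (JR_norm_le hsect (hmem s (Set.mem_Ioi.mp hs)))
        (div_le_self hK0 (le_add_of_nonneg_right (norm_nonneg _)))
    have habs2 : ‖(s:ℂ) * E - (r:ℂ) * E‖ = |s - r| := by
      have h3 : (s:ℂ) * E - (r:ℂ) * E = ((s - r : ℝ):ℂ) * E := by push_cast; ring
      rw [h3, norm_mul, Complex.norm_real, Real.norm_eq_abs, hEabs, mul_one]
    rw [norm_smul ((s:ℂ) * E - (r:ℂ) * E) ((J.comp (R ((r:ℂ) * E))).comp (J.comp (R ((s:ℂ) * E)))),
      habs2]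
    calc |s - r| * ‖(J.comp (R ((r:ℂ) * E))).comp (J.comp (R ((s:ℂ) * E)))‖
        ≤ |s - r| * (K * K) := by
          apply mul_le_mul_of_nonneg_left ?_ (abs_nonneg _)
          exact le_trans (ContinuousLinearMap.opNorm_comp_le _ _)
            (mul_le_mul h1 h2 (norm_nonneg _) hK0)
      _ = K * K * |r - s| := by rw [abs_sub_comm]; ring
  have hcontlam : Continuous (fun r : ℝ => (r:ℂ) * E) :=
    Complex.continuous_ofReal.mul continuous_const
  have hfcont : ContinuousOn (fun r : ℝ => f ((r:ℂ) * E)) (Set.Ioi 0) :=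
    hdiff.continuousOn.comp hcontlam.continuousOn
      (fun r hr => hmemc r (Set.mem_Ioi.mp hr))
  have hGcont : ContinuousOn
      (fun r : ℝ => (f ((r:ℂ) * E) * E) • (J.comp (R ((r:ℂ) * E)))) (Set.Ioi 0) :=
    (hfcont.mul continuousOn_const).smul hlip.continuousOn
  have hGint : MeasureTheory.IntegrableOn
      (fun r : ℝ => (f ((r:ℂ) * E) * E) • (J.comp (R ((r:ℂ) * E)))) (Set.Ioi 0) := by
    apply MeasureTheory.Integrable.mono'
      (g := fun r => c * K * (if r ≤ 1 then r ^ η else r ^ (-1 - η)))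
      ((integrable_dom hη).const_mul (c * K))
      (hGcont.aestronglyMeasurable_of_isSeparable measurableSet_Ioi
        (TopologicalSpace.IsSeparable.of_separableSpace _))
    rw [MeasureTheory.ae_restrict_iff' measurableSet_Ioi]
    filter_upwards with r hr
    have hr0 : 0 < r := Set.mem_Ioi.mp hr
    have hfb : ‖f ((r:ℂ) * E)‖ ≤ c * (r / (1 + r ^ 2)) ^ η := by
      have := hdecay ((r:ℂ) * E) (hmemc r hr0)
      rwa [habs r hr0] at this
    have hJRb : ‖J.comp (R ((r:ℂ) * E))‖ ≤ K / (1 + r) := by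
      have := JR_norm_le hsect (hmem r hr0)
      rwa [habs r hr0] at this
    calc ‖(f ((r:ℂ) * E) * E) • (J.comp (R ((r:ℂ) * E)))‖
        = ‖f ((r:ℂ) * E)‖ * ‖J.comp (R ((r:ℂ) * E))‖ := by
          rw [norm_smul (f ((r:ℂ) * E) * E) (J.comp (R ((r:ℂ) * E))),
            norm_mul, hEabs, mul_one]
      _ ≤ (c * (r / (1 + r ^ 2)) ^ η) * (K / (1 + r)) := by
          apply mul_le_mul hfb hJRb (norm_nonneg _)
          positivity
      _ = c * K * ((r / (1 + r ^ 2)) ^ η / (1 + r)) := by ring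
      _ ≤ c * K * (if r ≤ 1 then r ^ η else r ^ (-1 - η)) :=
          mul_le_mul_of_nonneg_left (point_bound hη hr0) (by positivity)
  refine ⟨∫ r in Set.Ioi (0:ℝ), (f ((r:ℂ) * E) * E) • (J.comp (R ((r:ℂ) * E))), ?_, ?_⟩
  · intro x
    rw [ContinuousLinearMap.integral_apply hGint x]
    congr 1
  · intro U
    have hstep : ∀ r : ℝ,
        (f ((r:ℂ) * E) * E) • (ContinuousLinearMap.compLpL p μ J)
            ((ContinuousLinearMap.compLpL p μ (R ((r:ℂ) * E))) U)
          = applyCompLp p μ U ((f ((r:ℂ) * E) * E) • (J.comp (R ((r:ℂ) * E)))) := by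
      intro r
      rw [applyCompLp_apply, ContinuousLinearMap.smul_compLpL,
        ContinuousLinearMap.smul_apply, compLpL_comp', ContinuousLinearMap.comp_apply]
    calc (∫ r in Set.Ioi (0:ℝ),
          (f ((r:ℂ) * E) * E) • (ContinuousLinearMap.compLpL p μ J)
            ((ContinuousLinearMap.compLpL p μ (R ((r:ℂ) * E))) U))
        = ∫ r in Set.Ioi (0:ℝ),
            applyCompLp p μ U ((f ((r:ℂ) * E) * E) • (J.comp (R ((r:ℂ) * E)))) := by
          congr 1; funext r; exact hstep r
      _ = applyCompLp p μ U
            (∫ r in Set.Ioi (0:ℝ), (f ((r:ℂ) * E) * E) • (J.comp (R ((r:ℂ) * E)))) :=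
          (applyCompLp p μ U).integral_comp_comm hGint
      _ = ContinuousLinearMap.compLpL p μ
            (∫ r in Set.Ioi (0:ℝ), (f ((r:ℂ) * E) * E) • (J.comp (R ((r:ℂ) * E)))) U :=
          applyCompLp_apply p μ U _

/-- The canonical (pointwise) extension of an operator `A` with bounded
`H^∞(θ)`-calculus on `X` to the Bochner space `L^p(Ω;X)` over a σ-finite measure space
again has bounded `H^∞`-calculus of angle `θ`, with resolvents and functional calculus
acting pointwise a.e. -/
theorem hinfty_extension_to_Lp
    {X XD : Type*} [NormedAddCommGroup X] [NormedSpace ℂ X] [CompleteSpace X]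
    [NormedAddCommGroup XD] [NormedSpace ℂ XD] [CompleteSpace XD]
    {Ω : Type*} [MeasurableSpace Ω] (μ : MeasureTheory.Measure Ω) [SigmaFinite μ]
    (p : ENNReal) [Fact (1 ≤ p)] (hp1 : 1 < p) (hptop : p ≠ ⊤)
    (J A : XD →L[ℂ] X) (hJinj : Function.Injective J) (hJdense : DenseRange J)
    (θ θc K C : ℝ) (hθ : θ ∈ Set.Ico 0 Real.pi) (hθc : θc ∈ Set.Ioo θ Real.pi)
    (R : ℂ → X →L[ℂ] XD) (hsect : IsSectorial J A θc K R)
    (hcal : HinftyBound J R θc θ C) :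
    -- the pointwise extensions of `J`, `A` and of the resolvents
    (∀ lam ∈ Sector θc,
      IsResolventAt (ContinuousLinearMap.compLpL p μ J)
        (ContinuousLinearMap.compLpL p μ A) lam
        (ContinuousLinearMap.compLpL p μ (R lam))) ∧
    -- sectoriality and the `H^∞`-calculus bound of the extension
    (∃ K' : ℝ, IsSectorial (ContinuousLinearMap.compLpL p μ J)
      (ContinuousLinearMap.compLpL p μ A) θc K'
      (fun lam => ContinuousLinearMap.compLpL p μ (R lam))) ∧
    (∃ C' : ℝ, HinftyBound (ContinuousLinearMap.compLpL p μ J)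
      (fun lam => ContinuousLinearMap.compLpL p μ (R lam)) θc θ C') ∧
    -- the resolvents act pointwise a.e.
    (∀ lam ∈ Sector θc, ∀ U : MeasureTheory.Lp X p μ,
      ∀ᵐ ω ∂μ, (ContinuousLinearMap.compLpL p μ (R lam) U) ω = R lam (U ω)) ∧
    -- the functional calculus acts pointwise a.e.
    (∀ f : ℂ → ℂ, HzeroClass θ f → ∀ U : MeasureTheory.Lp X p μ,
      ∀ᵐ ω ∂μ,
        dunford (ContinuousLinearMap.compLpL p μ J)
            (fun lam => ContinuousLinearMap.compLpL p μ (R lam)) θc f U ω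
          = dunford J R θc f (U ω)) := by
  obtain ⟨hθ0, hθπ⟩ := hθ
  obtain ⟨hθθc, hθcπ⟩ := hθc
  have hθc0 : 0 < θc := lt_of_le_of_lt hθ0 hθθc
  have hK0 : 0 ≤ K := K_nonneg hsect
  -- Part 1: resolvent identities for the extension
  have part1 : ∀ lam ∈ Sector θc,
      IsResolventAt (ContinuousLinearMap.compLpL p μ J) (ContinuousLinearMap.compLpL p μ A) lam
        (ContinuousLinearMap.compLpL p μ (R lam)) := by
    intro lam hlam
    obtain ⟨⟨e1, e2⟩, _⟩ := hsect lam hlam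
    constructor
    · rw [← ContinuousLinearMap.smul_compLpL, ← ContinuousLinearMap.add_compLpL,
        ← compLpL_comp', e1, compLpL_id']
    · rw [← ContinuousLinearMap.smul_compLpL, ← ContinuousLinearMap.add_compLpL,
        ← compLpL_comp', e2, compLpL_id']
  -- membership facts for the two rays
  have hφIoc : (θc : ℝ) ∈ Set.Ioc (-Real.pi) Real.pi :=
    ⟨by nlinarith [Real.pi_pos], hθcπ.le⟩
  have hφIoc' : (-θc : ℝ) ∈ Set.Ioc (-Real.pi) Real.pi :=
    ⟨by nlinarith [Real.pi_pos], by nlinarith [Real.pi_pos]⟩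
  have hcast : ((-θc : ℝ) : ℂ) * Complex.I = -(θc:ℂ) * Complex.I := by push_cast; ring
  have hmemp : ∀ r : ℝ, 0 < r →
      (r:ℂ) * Complex.exp ((θc:ℂ) * Complex.I) ∈ Sector θc :=
    fun r hr => mem_sector hr hφIoc (le_of_eq (abs_of_pos hθc0))
  have hmemcp : ∀ r : ℝ, 0 < r →
      (r:ℂ) * Complex.exp ((θc:ℂ) * Complex.I) ∈ (Sector θ)ᶜ :=
    fun r hr => mem_sector_compl hr hφIoc (by rw [abs_of_pos hθc0]; exact hθθc)
  have hmemm : ∀ r : ℝ, 0 < r →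
      (r:ℂ) * Complex.exp (-(θc:ℂ) * Complex.I) ∈ Sector θc := by
    intro r hr
    have := mem_sector (θ := θc) hr hφIoc' (by rw [abs_neg, abs_of_pos hθc0])
    rwa [hcast] at this
  have hmemcm : ∀ r : ℝ, 0 < r →
      (r:ℂ) * Complex.exp (-(θc:ℂ) * Complex.I) ∈ (Sector θ)ᶜ := by
    intro r hr
    have := mem_sector_compl (θ := θ) hr hφIoc'
      (by rw [abs_neg, abs_of_pos hθc0]; exact hθθc)
    rwa [hcast] at this
  have habsEp : ‖Complex.exp ((θc:ℂ) * Complex.I)‖ = 1 :=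
    Complex.norm_exp_ofReal_mul_I θc
  have habsEm : ‖Complex.exp (-(θc:ℂ) * Complex.I)‖ = 1 := by
    rw [← hcast]; exact Complex.norm_exp_ofReal_mul_I (-θc)
  -- the main pointwise-operator description of the extended Dunford integral
  have main : ∀ f : ℂ → ℂ, HzeroClass θ f → ∃ T : X →L[ℂ] X,
      (∀ x : X, T x = dunford J R θc f x) ∧
      (∀ U : MeasureTheory.Lp X p μ,
        dunford (ContinuousLinearMap.compLpL p μ J)
          (fun lam => ContinuousLinearMap.compLpL p μ (R lam)) θc f U
          = ContinuousLinearMap.compLpL p μ T U) := by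
    intro f hf
    obtain ⟨hdiff, c, hc, η, hη, hdecay⟩ := hf
    obtain ⟨Pp, hPpx, hPpU⟩ := ray_op μ p J A hsect hK0 f hdiff hc hη hdecay
      (Complex.exp ((θc:ℂ) * Complex.I)) habsEp hmemp hmemcp
    obtain ⟨Pm, hPmx, hPmU⟩ := ray_op μ p J A hsect hK0 f hdiff hc hη hdecay
      (Complex.exp (-(θc:ℂ) * Complex.I)) habsEm hmemm hmemcm
    refine ⟨(2 * (Real.pi : ℂ) * Complex.I)⁻¹ • (Pp - Pm), ?_, ?_⟩
    · intro x
      rw [dunford]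
      simp only [ContinuousLinearMap.smul_apply, ContinuousLinearMap.sub_apply, hPpx, hPmx]
    · intro U
      rw [dunford]
      beta_reduce
      erw [hPpU U, hPmU U]
      rw [ContinuousLinearMap.smul_compLpL, ContinuousLinearMap.smul_apply]
      congr 1
      rw [← applyCompLp_apply p μ U, ← applyCompLp_apply p μ U, ← applyCompLp_apply p μ U,
        ← map_sub]
  refine ⟨part1, ⟨K, ?_⟩, ⟨max C 0, ?_⟩, ?_, ?_⟩
  · -- sectoriality of the extension
    intro lam hlam
    refine ⟨part1 lam hlam, ?_⟩
    calc (1 + ‖lam‖) *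
          ‖(ContinuousLinearMap.compLpL p μ J).comp (ContinuousLinearMap.compLpL p μ (R lam))‖
        = (1 + ‖lam‖) * ‖ContinuousLinearMap.compLpL p μ (J.comp (R lam))‖ := by
          rw [compLpL_comp']
      _ ≤ (1 + ‖lam‖) * ‖J.comp (R lam)‖ :=
          mul_le_mul_of_nonneg_left (ContinuousLinearMap.norm_compLpL_le _)
            (by positivity)
      _ ≤ K := (hsect lam hlam).2
  · -- H∞ bound of the extension
    intro f hf U
    obtain ⟨T, hTx, hTU⟩ := main f hf
    rw [hTU U]
    have hM : 0 ≤ ⨆ z ∈ (Sector θ)ᶜ, ‖f z‖ :=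
      Real.iSup_nonneg fun z => Real.iSup_nonneg fun _ => norm_nonneg _
    have hTnorm : ‖T‖ ≤ max C 0 * ⨆ z ∈ (Sector θ)ᶜ, ‖f z‖ := by
      apply ContinuousLinearMap.opNorm_le_bound _ (by positivity)
      intro x
      rw [hTx]
      refine le_trans (hcal f hf x) ?_
      apply mul_le_mul_of_nonneg_right ?_ (norm_nonneg x)
      exact mul_le_mul_of_nonneg_right (le_max_left C 0) hM
    calc ‖ContinuousLinearMap.compLpL p μ T U‖
        ≤ ‖ContinuousLinearMap.compLpL p μ T‖ * ‖U‖ := ContinuousLinearMap.le_opNorm _ _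
      _ ≤ ‖T‖ * ‖U‖ :=
          mul_le_mul_of_nonneg_right (ContinuousLinearMap.norm_compLpL_le _) (norm_nonneg _)
      _ ≤ (max C 0 * ⨆ z ∈ (Sector θ)ᶜ, ‖f z‖) * ‖U‖ :=
          mul_le_mul_of_nonneg_right hTnorm (norm_nonneg _)
  · -- resolvents act pointwise
    intro lam hlam U
    exact ContinuousLinearMap.coeFn_compLpL (R lam) U
  · -- the functional calculus acts pointwise
    intro f hf U
    obtain ⟨T, hTx, hTU⟩ := main f hf
    rw [hTU U]
    filter_upwards [ContinuousLinearMap.coeFn_compLpL T U] with ω hω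
    rw [hω, hTx]
end
end

section
/- Let A be invertible sectorial of angle θ with S_θ ⊂ ρ(−A) on a Banach space E, and suppose that for some dense scale E_η ↪ E (η ≥ 0, E_0 = E) the resolvent restricts compatibly: (A_η + λ)^{-1} = (A + λ)^{-1}|_{E_η} for λ ∈ S_θ, where A_η is the part of A in E_η with D(A_η) = E_{η+2}, and moreover ‖u‖_{E_{η+2}} ≤ C(‖u‖_{E_η} + ‖A_η u‖_{E_η}). If A has bounded H^∞-calculus of angle θ on E and A_r ∈ H^∞(θ) for some r with r/2 ∈ ℕ₀, then A_{r+2} also has bounded H^∞-calculus of angle θ on E_{r+2}, with f(A_{r+2}) = f(A_r)|_{E_{r+2}} and ‖f(A_{r+2})‖_{L(E_{r+2})} ≤ C' sup|f| for f ∈ H₀^∞(θ). -/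
noncomputable section

open MeasureTheory Set

variable {X₀ X₁ : Type*} [NormedAddCommGroup X₀] [NormedSpace ℂ X₀]
  [NormedAddCommGroup X₁] [NormedSpace ℂ X₁]

section AuxResolvent

variable {X₀ X₁ : Type*} [NormedAddCommGroup X₀] [NormedSpace ℂ X₀]
  [NormedAddCommGroup X₁] [NormedSpace ℂ X₁]

lemma IsResolventAt.apply_right {J A : X₁ →L[ℂ] X₀} {lam : ℂ} {Rl : X₀ →L[ℂ] X₁}
    (h : IsResolventAt J A lam Rl) (v : X₀) : A (Rl v) + lam • J (Rl v) = v := by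
  have := ContinuousLinearMap.ext_iff.mp h.1 v
  simpa [ContinuousLinearMap.comp_apply, ContinuousLinearMap.add_apply,
    ContinuousLinearMap.smul_apply] using this

lemma IsResolventAt.apply_left {J A : X₁ →L[ℂ] X₀} {lam : ℂ} {Rl : X₀ →L[ℂ] X₁}
    (h : IsResolventAt J A lam Rl) (u : X₁) : Rl (A u) + lam • Rl (J u) = u := by
  have := ContinuousLinearMap.ext_iff.mp h.2 u
  simpa [ContinuousLinearMap.comp_apply, ContinuousLinearMap.add_apply,
    ContinuousLinearMap.smul_apply, _root_.map_add, _root_.map_smul] using this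

lemma resolvent_diff_s17 {J A : X₁ →L[ℂ] X₀} {lam mu : ℂ} {Rl Rm : X₀ →L[ℂ] X₁}
    (hl : IsResolventAt J A lam Rl) (hm : IsResolventAt J A mu Rm) (v : X₀) :
    Rm v = Rl v + (lam - mu) • Rm (J (Rl v)) := by
  have e1 := hl.apply_right v
  have e2 : Rm (A (Rl v)) + mu • Rm (J (Rl v)) = Rl v := hm.apply_left (Rl v)
  calc Rm v = Rm (A (Rl v) + lam • J (Rl v)) := by rw [e1]
    _ = Rm (A (Rl v)) + lam • Rm (J (Rl v)) := by rw [_root_.map_add, _root_.map_smul]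
    _ = Rl v + (lam - mu) • Rm (J (Rl v)) := by
        have e3 : Rl v + (lam - mu) • Rm (J (Rl v))
            = Rm (A (Rl v)) + mu • Rm (J (Rl v)) + (lam - mu) • Rm (J (Rl v)) := by
          rw [e2]
        rw [e3, sub_smul]; abel

lemma resolvent_comm {J A : X₁ →L[ℂ] X₀} {lam : ℂ} {Rl R0 : X₀ →L[ℂ] X₁}
    (hl : IsResolventAt J A lam Rl) (h0 : IsResolventAt J A 0 R0) (x : X₁) :
    Rl (J x) = R0 (J (Rl (A x))) := by
  set u := Rl (A x) with hu
  have e1 : A u + lam • J u = A x := hl.apply_right (A x)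
  have h0l : ∀ w : X₁, R0 (A w) = w := fun w => by
    have := h0.apply_left w; simpa using this
  have h0r : ∀ v : X₀, A (R0 v) = v := fun v => by
    have := h0.apply_right v; simpa using this
  set w := R0 (J u) with hw
  have star : u + lam • w = x := by
    have h := congrArg R0 e1
    rw [_root_.map_add, _root_.map_smul, h0l u, h0l x] at h
    simpa [hw] using h
  have e5 : Rl (J u + lam • J w) = w := by
    have e5 := hl.apply_left w
    have hAw : A w = J u := by rw [hw, h0r]
    rw [hAw] at e5
    rw [_root_.map_add, _root_.map_smul]; exact e5
  have hJx : J x = J u + lam • J w := by rw [← star, _root_.map_add, _root_.map_smul]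
  rw [hJx, e5, hw]

end AuxResolvent

set_option maxHeartbeats 2000000 in
/-- Bootstrap of the bounded `H^∞`-calculus along a compatible scale of
spaces.  `Er` plays the role of `E_r`, `Er2` of `E_{r+2}` (the domain of the part `A_r` of
`A` in `E_r`), and `Er4` of `E_{r+4}` (the domain of the part `A_{r+2}` of `A` in
`E_{r+2}`); the resolvents restrict compatibly and the `E_{r+2}`-norm is equivalent to the
graph norm of `A_r`.  If `A_r` has bounded `H^∞(θ)`-calculus on `E_r`, then `A_{r+2}` has
bounded `H^∞(θ)`-calculus on `E_{r+2}`, given by restriction: for every `f ∈ H₀^∞(θ)` and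
`x ∈ E_{r+2}`, `f(A_r) x ∈ E_{r+2}` with `‖f(A_{r+2}) x‖_{E_{r+2}} ≤ C' sup |f| ‖x‖`. -/
theorem hinfty_bootstrap
    {Er Er2 Er4 : Type*}
    [NormedAddCommGroup Er] [NormedSpace ℂ Er] [CompleteSpace Er]
    [NormedAddCommGroup Er2] [NormedSpace ℂ Er2] [CompleteSpace Er2]
    [NormedAddCommGroup Er4] [NormedSpace ℂ Er4] [CompleteSpace Er4]
    (j2 : Er2 →L[ℂ] Er) (j4 : Er4 →L[ℂ] Er2)
    (hj2 : Function.Injective j2) (hj4 : Function.Injective j4)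
    (Ar : Er2 →L[ℂ] Er) (Ar2 : Er4 →L[ℂ] Er2)
    -- `A_{r+2}` is the part of `A_r` in `E_{r+2}`
    (hpart : j2.comp Ar2 = Ar.comp j4)
    (θ θc K : ℝ) (hθ : θ ∈ Set.Ioo 0 Real.pi) (hθc : θc ∈ Set.Ioo θ Real.pi)
    (Rr : ℂ → Er →L[ℂ] Er2) (hsect : IsSectorial j2 Ar θc K Rr)
    (R2 : ℂ → Er2 →L[ℂ] Er4)
    -- the resolvent of `A_r` restricts compatibly to `E_{r+2}`
    (hres2 : ∀ lam ∈ Sector θc, IsResolventAt j4 Ar2 lam (R2 lam) ∧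
      (Rr lam).comp j2 = j4.comp (R2 lam))
    -- graph norm equivalence `‖u‖_{E_{r+4}} ≤ C (‖u‖_{E_{r+2}} + ‖A_{r+2} u‖_{E_{r+2}})`
    (Cg : ℝ) (hgraph : ∀ u : Er4, ‖u‖ ≤ Cg * (‖j4 u‖ + ‖Ar2 u‖))
    (C : ℝ) (hcal : HinftyBound j2 Rr θc θ C) :
    ∃ C' : ℝ, ∀ f : ℂ → ℂ, HzeroClass θ f → ∀ x : Er2,
      ∃ y : Er2, j2 y = dunford j2 Rr θc f (j2 x) ∧
        ‖y‖ ≤ C' * (⨆ z ∈ (Sector θ)ᶜ, ‖f z‖) * ‖x‖ := by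
  obtain ⟨hθ0, hθπ⟩ := hθ
  obtain ⟨hθcθ, hθcπ⟩ := hθc
  have hθc0 : 0 < θc := lt_trans hθ0 hθcθ
  have h0mem : (0:ℂ) ∈ Sector θc := Or.inl rfl
  have h0 : IsResolventAt j2 Ar 0 (Rr 0) := (hsect 0 h0mem).1
  have hK : 0 ≤ K := le_trans (by positivity) (hsect 0 h0mem).2
  have hTnorm : ∀ lam ∈ Sector θc, ‖j2.comp (Rr lam)‖ ≤ K / (1 + ‖lam‖) := by
    intro lam hlam
    have h := (hsect lam hlam).2
    rw [le_div_iff₀ (by positivity)]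
    linarith
  have hTK : ∀ lam ∈ Sector θc, ∀ v : Er, ‖j2 (Rr lam v)‖ ≤ K * ‖v‖ := by
    intro lam hlam v
    have h1 : ‖j2 (Rr lam v)‖ ≤ ‖j2.comp (Rr lam)‖ * ‖v‖ := by
      simpa using (j2.comp (Rr lam)).le_opNorm v
    have h2 := hTnorm lam hlam
    have h3 : K / (1 + ‖lam‖) ≤ K := by
      rw [div_le_iff₀ (by positivity)]
      nlinarith [norm_nonneg lam]
    exact le_trans h1 (mul_le_mul_of_nonneg_right (le_trans h2 h3) (norm_nonneg v))
  have hargray : ∀ a : ℝ, a ∈ Set.Ioc (-Real.pi) Real.pi → ∀ r : ℝ, 0 < r →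
      Complex.arg ((r:ℂ) * Complex.exp ((a:ℂ) * Complex.I)) = a := by
    intro a ha r hr
    rw [Complex.exp_mul_I]
    exact Complex.arg_mul_cos_add_sin_mul_I hr ha
  have hraymem : ∀ a : ℝ, |a| = θc → a ∈ Set.Ioc (-Real.pi) Real.pi → ∀ r : ℝ, 0 < r →
      ((r:ℂ) * Complex.exp ((a:ℂ) * Complex.I) ∈ Sector θc ∧
        (r:ℂ) * Complex.exp ((a:ℂ) * Complex.I) ∉ Sector θ) := by
    intro a habs ha r hr
    have harg := hargray a ha r hr
    have habsz : ‖(r:ℂ) * Complex.exp ((a:ℂ) * Complex.I)‖ = r := by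
      rw [norm_mul, Complex.norm_exp_ofReal_mul_I, mul_one, Complex.norm_real, Real.norm_eq_abs, abs_of_pos hr]
    constructor
    · exact Or.inr (by rw [harg, habs])
    · rintro (hz | hz)
      · rw [hz] at habsz; simp at habsz; linarith
      · rw [harg, habs] at hz; linarith
  have hπ0 := Real.pi_pos
  have hmemP := hraymem θc (abs_of_pos hθc0) ⟨by linarith, le_of_lt hθcπ⟩
  have hmemM := hraymem (-θc) (by rw [abs_neg, abs_of_pos hθc0]) ⟨by linarith, by linarith⟩
  have hcast : ((-θc : ℝ) : ℂ) = -(θc:ℂ) := by push_cast; ring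
  rw [hcast] at hmemM
  have heP : ‖Complex.exp ((θc:ℂ) * Complex.I)‖ = 1 :=
    Complex.norm_exp_ofReal_mul_I θc
  have heM : ‖Complex.exp (-(θc:ℂ) * Complex.I)‖ = 1 := by
    rw [← hcast]; exact Complex.norm_exp_ofReal_mul_I (-θc)
  refine ⟨‖Rr 0‖ * max C 0 * ‖Ar‖, ?_⟩
  intro f hf x
  obtain ⟨hfd, cf, hcf, η, hη, hfb⟩ := id hf
  have hfc : ContinuousOn f (Sector θ)ᶜ := hfd.continuousOn
  -- integrability of the Dunford integrand along each ray, for any input vector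
  have hint : ∀ e : ℂ, ‖e‖ = 1 →
      (∀ r : ℝ, 0 < r → ((r:ℂ) * e ∈ Sector θc ∧ (r:ℂ) * e ∉ Sector θ)) →
      ∀ v : Er, IntegrableOn
        (fun r : ℝ => (f ((r:ℂ) * e) * e) • j2 (Rr ((r:ℂ) * e) v)) (Set.Ioi 0) := by
    intro e he hre v
    have hFcont : ContinuousOn (fun r : ℝ => j2 (Rr ((r:ℂ) * e) v)) (Set.Ioi 0) := by
      have hlip : LipschitzOnWith (Real.toNNReal (K ^ 2 * ‖v‖))
          (fun r : ℝ => j2 (Rr ((r:ℂ) * e) v)) (Set.Ioi 0) := by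
        rw [lipschitzOnWith_iff_dist_le_mul]
        intro r hr s hs
        have hrm := (hre r hr).1
        have hsm := (hre s hs).1
        have hd := resolvent_diff_s17 (hsect _ hsm).1 (hsect _ hrm).1 v
        have heq : j2 (Rr ((r:ℂ) * e) v) - j2 (Rr ((s:ℂ) * e) v)
            = ((s:ℂ) * e - (r:ℂ) * e) • j2 (Rr ((r:ℂ) * e) (j2 (Rr ((s:ℂ) * e) v))) := by
          rw [← _root_.map_smul, ← _root_.map_sub]
          congr 1
          rw [hd]; abel
        rw [dist_eq_norm, heq, norm_smul, Real.dist_eq]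
        have h1 : ‖(s:ℂ) * e - (r:ℂ) * e‖ = |s - r| := by
          rw [show (s:ℂ) * e - (r:ℂ) * e = ((s - r : ℝ):ℂ) * e by push_cast; ring,
            norm_mul, he, mul_one, Complex.norm_real, Real.norm_eq_abs]
        have h2 : ‖j2 (Rr ((r:ℂ) * e) (j2 (Rr ((s:ℂ) * e) v)))‖ ≤ K * (K * ‖v‖) :=
          le_trans (hTK _ hrm _) (mul_le_mul_of_nonneg_left (hTK _ hsm v) hK)
        rw [h1, Real.coe_toNNReal']
        have h5 : |s - r| = |r - s| := abs_sub_comm s r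
        nlinarith [abs_nonneg (s - r),
          norm_nonneg (j2 (Rr ((r:ℂ) * e) (j2 (Rr ((s:ℂ) * e) v)))),
          le_max_left (K ^ 2 * ‖v‖) (0:ℝ),
          mul_le_mul_of_nonneg_left h2 (abs_nonneg (s - r))]
      exact hlip.continuousOn
    have hfcont : ContinuousOn (fun r : ℝ => f ((r:ℂ) * e)) (Set.Ioi 0) :=
      hfc.comp ((Complex.continuous_ofReal.mul continuous_const).continuousOn)
        (fun r hr => (hre r hr).2)
    have hGcont : ContinuousOn
        (fun r : ℝ => (f ((r:ℂ) * e) * e) • j2 (Rr ((r:ℂ) * e) v)) (Set.Ioi 0) :=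
      (hfcont.mul continuousOn_const).smul hFcont
    have habsre : ∀ r : ℝ, 0 < r → ‖(r:ℂ) * e‖ = r := by
      intro r hr
      rw [norm_mul, he, mul_one, Complex.norm_real, Real.norm_eq_abs, abs_of_pos hr]
    have hGb : ∀ r : ℝ, 0 < r →
        ‖(f ((r:ℂ) * e) * e) • j2 (Rr ((r:ℂ) * e) v)‖
          ≤ cf * (r / (1 + r ^ 2)) ^ η * (K / (1 + r) * ‖v‖) := by
      intro r hr
      rw [norm_smul, norm_mul, he, mul_one]
      have hb1 : ‖f ((r:ℂ) * e)‖ ≤ cf * (r / (1 + r ^ 2)) ^ η := by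
        have h := hfb _ (hre r hr).2
        rwa [habsre r hr] at h
      have hb2 : ‖j2 (Rr ((r:ℂ) * e) v)‖ ≤ K / (1 + r) * ‖v‖ := by
        have h1 : ‖j2 (Rr ((r:ℂ) * e) v)‖ ≤ ‖j2.comp (Rr ((r:ℂ) * e))‖ * ‖v‖ := by
          simpa using (j2.comp (Rr ((r:ℂ) * e))).le_opNorm v
        have h2 := hTnorm _ (hre r hr).1
        rw [habsre r hr] at h2
        exact le_trans h1 (mul_le_mul_of_nonneg_right h2 (norm_nonneg v))
      exact mul_le_mul hb1 hb2 (norm_nonneg _) (by positivity)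
    have hI1 : IntegrableOn
        (fun r : ℝ => (f ((r:ℂ) * e) * e) • j2 (Rr ((r:ℂ) * e) v)) (Set.Ioc 0 1) := by
      have hbase : IntegrableOn (fun r : ℝ => r ^ η) (Set.Ioc (0:ℝ) 1) :=
        (intervalIntegrable_iff_integrableOn_Ioc_of_le zero_le_one).mp
          (intervalIntegral.intervalIntegrable_rpow' (by linarith))
      refine Integrable.mono' (hbase.const_mul (cf * K * ‖v‖)) ?_ ?_
      · exact (hGcont.mono Set.Ioc_subset_Ioi_self).aestronglyMeasurable measurableSet_Ioc
      · filter_upwards [self_mem_ae_restrict measurableSet_Ioc] with r hr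
        obtain ⟨hr0, hr1⟩ := hr
        refine le_trans (hGb r hr0) ?_
        have e1 : (r / (1 + r ^ 2)) ^ η ≤ r ^ η :=
          Real.rpow_le_rpow (by positivity)
            (by rw [div_le_iff₀ (by positivity)]; nlinarith) hη.le
        have e2 : K / (1 + r) * ‖v‖ ≤ K * ‖v‖ := by
          apply mul_le_mul_of_nonneg_right _ (norm_nonneg v)
          rw [div_le_iff₀ (by positivity)]; nlinarith
        calc cf * (r / (1 + r ^ 2)) ^ η * (K / (1 + r) * ‖v‖)
            ≤ cf * r ^ η * (K * ‖v‖) :=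
              mul_le_mul (mul_le_mul_of_nonneg_left e1 hcf.le) e2 (by positivity)
                (by positivity)
          _ = cf * K * ‖v‖ * r ^ η := by ring
    have hI2 : IntegrableOn
        (fun r : ℝ => (f ((r:ℂ) * e) * e) • j2 (Rr ((r:ℂ) * e) v)) (Set.Ioi 1) := by
      have hbase : IntegrableOn (fun r : ℝ => r ^ (-1 - η)) (Set.Ioi (1:ℝ)) :=
        integrableOn_Ioi_rpow_of_lt (by linarith) one_pos
      refine Integrable.mono' (hbase.const_mul (cf * K * ‖v‖)) ?_ ?_
      · exact (hGcont.mono (Set.Ioi_subset_Ioi zero_le_one)).aestronglyMeasurable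
          measurableSet_Ioi
      · filter_upwards [self_mem_ae_restrict measurableSet_Ioi] with r hr
        have hr1 : (1:ℝ) < r := hr
        have hr0 : (0:ℝ) < r := lt_trans one_pos hr1
        refine le_trans (hGb r hr0) ?_
        have e1 : (r / (1 + r ^ 2)) ^ η ≤ r ^ (-η) := by
          have h1 : r / (1 + r ^ 2) ≤ 1 / r := by
            rw [div_le_div_iff₀ (by positivity) hr0]
            nlinarith
          calc (r / (1 + r ^ 2)) ^ η ≤ (1 / r) ^ η :=
              Real.rpow_le_rpow (by positivity) h1 hη.le
            _ = r ^ (-η) := by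
              rw [one_div, Real.inv_rpow hr0.le, Real.rpow_neg hr0.le]
        have e2 : K / (1 + r) * ‖v‖ ≤ K * r ^ ((-1):ℝ) * ‖v‖ := by
          apply mul_le_mul_of_nonneg_right _ (norm_nonneg v)
          rw [Real.rpow_neg_one, div_le_iff₀ (by positivity)]
          nlinarith [mul_inv_cancel₀ (ne_of_gt hr0), inv_pos.mpr hr0, hK]
        refine le_trans (mul_le_mul (mul_le_mul_of_nonneg_left e1 hcf.le) e2
          (by positivity) (by positivity)) (le_of_eq ?_)
        calc cf * r ^ (-η) * (K * r ^ ((-1):ℝ) * ‖v‖)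
            = cf * K * ‖v‖ * (r ^ (-η) * r ^ ((-1):ℝ)) := by ring
          _ = cf * K * ‖v‖ * r ^ (-1 - η) := by
              rw [← Real.rpow_add hr0, show -η + ((-1):ℝ) = -1 - η by ring]
    have hunion := hI1.union hI2
    rwa [Set.Ioc_union_Ioi_eq_Ioi zero_le_one] at hunion
  -- commuting `j2 ∘ Rr 0` out of the Dunford integrals
  have hswap : ∀ e : ℂ, ‖e‖ = 1 →
      (∀ r : ℝ, 0 < r → ((r:ℂ) * e ∈ Sector θc ∧ (r:ℂ) * e ∉ Sector θ)) →
      (∫ r in Set.Ioi (0:ℝ), (f ((r:ℂ) * e) * e) • j2 (Rr ((r:ℂ) * e) (j2 x)))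
        = j2 (Rr 0 (∫ r in Set.Ioi (0:ℝ),
            (f ((r:ℂ) * e) * e) • j2 (Rr ((r:ℂ) * e) (Ar x)))) := by
    intro e he hre
    have hptwise : Set.EqOn
        (fun r : ℝ => (f ((r:ℂ) * e) * e) • j2 (Rr ((r:ℂ) * e) (j2 x)))
        (fun r : ℝ => (j2.comp (Rr 0)) ((f ((r:ℂ) * e) * e) • j2 (Rr ((r:ℂ) * e) (Ar x))))
        (Set.Ioi 0) := by
      intro r hr
      simp only [ContinuousLinearMap.comp_apply, _root_.map_smul]
      congr 1
      exact congrArg j2 (resolvent_comm (hsect _ (hre r hr).1).1 h0 x)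
    rw [setIntegral_congr_fun measurableSet_Ioi hptwise,
      (j2.comp (Rr 0)).integral_comp_comm (hint e he hre (Ar x))]
    rfl
  refine ⟨Rr 0 (dunford j2 Rr θc f (Ar x)), ?_, ?_⟩
  · show j2 (Rr 0 (dunford j2 Rr θc f (Ar x))) = dunford j2 Rr θc f (j2 x)
    simp only [dunford]
    rw [hswap _ heP hmemP, hswap _ heM hmemM]
    simp [_root_.map_smul, _root_.map_sub]
  · have hd := hcal f hf (Ar x)
    have hS : 0 ≤ ⨆ z ∈ (Sector θ)ᶜ, ‖f z‖ :=
      Real.iSup_nonneg fun z => Real.iSup_nonneg fun _ => norm_nonneg _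
    have h1 : ‖Rr 0 (dunford j2 Rr θc f (Ar x))‖
        ≤ ‖Rr 0‖ * ‖dunford j2 Rr θc f (Ar x)‖ := (Rr 0).le_opNorm _
    have h2 : ‖Ar x‖ ≤ ‖Ar‖ * ‖x‖ := Ar.le_opNorm x
    calc ‖Rr 0 (dunford j2 Rr θc f (Ar x))‖
        ≤ ‖Rr 0‖ * ‖dunford j2 Rr θc f (Ar x)‖ := h1
      _ ≤ ‖Rr 0‖ * (max C 0 * (⨆ z ∈ (Sector θ)ᶜ, ‖f z‖) * (‖Ar‖ * ‖x‖)) := by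
          apply mul_le_mul_of_nonneg_left _ (norm_nonneg _)
          refine le_trans hd ?_
          have hC : C * (⨆ z ∈ (Sector θ)ᶜ, ‖f z‖) * ‖Ar x‖
              ≤ max C 0 * (⨆ z ∈ (Sector θ)ᶜ, ‖f z‖) * ‖Ar x‖ := by
            apply mul_le_mul_of_nonneg_right _ (norm_nonneg _)
            exact mul_le_mul_of_nonneg_right (le_max_left C 0) hS
          refine le_trans hC ?_
          exact mul_le_mul_of_nonneg_left h2 (by positivity)
      _ = ‖Rr 0‖ * max C 0 * ‖Ar‖ * (⨆ z ∈ (Sector θ)ᶜ, ‖f z‖) * ‖x‖ := by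
          ring
end
end
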